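/- Let a < b be real numbers, let 0 < α ≤ 1, and let g : [a,b] → ℝ be continuous. Then for every t ∈ [a,b] there exists η ∈ [a,t] such that (1/Γ(α)) ∫_a^t (t−s)^(α−1) [ (1/Γ(α)) ∫_a^s (s−u)^(α−1) g(u) du ] ds = g(η) · (t−a)^(2α)/Γ(2α+1). -/

import Mathlib

open intervalIntegral Real Set MeasureTheory

lemma real_beta {p q : ℝ} (hp : 0 < p) (hq : 0 < q) :
    ∫ x in (0:ℝ)..1, x ^ (p-1) * (1-x) ^ (q-1)
      = Real.Gamma p * Real.Gamma q / Real.Gamma (p+q) := by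
  have key := Complex.Gamma_mul_Gamma_eq_betaIntegral (s := (p:ℂ)) (t := (q:ℂ))
    (by simpa using hp) (by simpa using hq)
  have hB : Complex.betaIntegral (p:ℂ) (q:ℂ)
      = ((∫ x in (0:ℝ)..1, x ^ (p-1) * (1-x) ^ (q-1) : ℝ) : ℂ) := by
    rw [Complex.betaIntegral, ← intervalIntegral.integral_ofReal]
    apply intervalIntegral.integral_congr
    intro x hx
    rw [Set.uIcc_of_le (by norm_num : (0:ℝ) ≤ 1)] at hx
    show _ = ((x ^ (p - 1) * (1 - x) ^ (q - 1) : ℝ) : ℂ)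
    rw [Complex.ofReal_mul, Complex.ofReal_cpow hx.1,
      Complex.ofReal_cpow (by linarith [hx.2] : (0:ℝ) ≤ 1 - x)]
    push_cast
    ring
  rw [hB, ← Complex.ofReal_add, Complex.Gamma_ofReal, Complex.Gamma_ofReal,
    Complex.Gamma_ofReal, ← Complex.ofReal_mul, ← Complex.ofReal_mul] at key
  have := Complex.ofReal_inj.mp key
  have hΓ : Real.Gamma (p+q) ≠ 0 := (Real.Gamma_pos_of_pos (by linarith)).ne'
  field_simp [this]
  rw [this]; ring

lemma inner_rpow_int {a s α : ℝ} (hα0 : 0 < α) (has : a ≤ s) :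
    ∫ u in a..s, (s-u)^(α-1) = (s-a)^α / α := by
  rw [intervalIntegral.integral_comp_sub_left (fun v => v ^ (α-1)) s, sub_self,
    integral_rpow (Or.inl (by linarith))]
  rw [Real.zero_rpow (by linarith : α - 1 + 1 ≠ 0)]
  norm_num

lemma rpow_kernel_integrable {a t α : ℝ} (hα0 : 0 < α) :
    IntervalIntegrable (fun s => (t-s)^(α-1)) volume a t := by
  have h := (intervalIntegrable_rpow' (a := t - a) (b := t - t)
    (r := α - 1) (by linarith)).comp_sub_left t
  simpa using h

lemma outer_beta {a t α : ℝ} (hα0 : 0 < α) (hat : a < t) :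
    ∫ s in a..t, (t-s)^(α-1) * (s-a)^α
      = (t-a)^(2*α) * (Real.Gamma (α+1) * Real.Gamma α / Real.Gamma (2*α+1)) := by
  set c := t - a with hc
  have hcpos : 0 < c := by simp [hc]; linarith
  have h1 := intervalIntegral.integral_comp_mul_add (a := (0:ℝ)) (b := 1)
    (fun y => (t-y)^(α-1)*(y-a)^α) hcpos.ne' a
  have h2 : (∫ x in (0:ℝ)..1, (t - (c*x+a))^(α-1) * ((c*x+a)-a)^α)
      = c^(2*α-1) * ∫ x in (0:ℝ)..1, x^((α+1)-1) * (1-x)^(α-1) := by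
    rw [← intervalIntegral.integral_const_mul]
    apply intervalIntegral.integral_congr
    intro x hx
    rw [Set.uIcc_of_le (by norm_num : (0:ℝ) ≤ 1)] at hx
    show (t - (c*x+a))^(α-1) * ((c*x+a)-a)^α = _
    have hx0 : 0 ≤ x := hx.1
    have hx1 : 0 ≤ 1 - x := by linarith [hx.2]
    have e1 : t - (c*x+a) = c * (1-x) := by rw [hc]; ring
    have e2 : (c*x+a) - a = c * x := by ring
    rw [e1, e2, Real.mul_rpow hcpos.le hx1, Real.mul_rpow hcpos.le hx0,
      show (α+1)-1 = α by ring, show 2*α-1 = (α-1)+α by ring,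
      Real.rpow_add hcpos]
    ring
  rw [h2] at h1
  rw [real_beta (by linarith) hα0, show α+1+α = 2*α+1 by ring] at h1
  have : (∫ s in a..t, (t-s)^(α-1) * (s-a)^α)
      = c * (c^(2*α-1) * (Real.Gamma (α+1) * Real.Gamma α / Real.Gamma (2*α+1))) := by
    have h3 : c * 0 + a = a := by ring
    have h4 : c * 1 + a = t := by rw [hc]; ring
    rw [h3, h4, smul_eq_mul] at h1
    field_simp at h1 ⊢
    linarith [h1]
  have hpow : c * c ^ (2*α-1) = c ^ (2*α) := by
    nth_rewrite 1 [← Real.rpow_one c]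
    rw [← Real.rpow_add hcpos]
    congr 1
    ring
  rw [this, ← mul_assoc, hpow]

/-- Mean-value representation of the double Riemann–Liouville fractional integral:
for continuous `g` on `[a,b]` and `0 < α ≤ 1`, for each `t ∈ [a,b]` there is
`η ∈ [a,t]` with `I^α_a(I^α_a g)(t) = g(η)·(t−a)^(2α)/Γ(2α+1)`. -/
theorem double_rl_integral_mean_value
    (a b α : ℝ) (hab : a < b) (hα0 : 0 < α) (hα1 : α ≤ 1)
    (g : ℝ → ℝ) (hg : ContinuousOn g (Set.Icc a b)) :
    ∀ t ∈ Set.Icc a b, ∃ η ∈ Set.Icc a t,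
      (1 / Real.Gamma α) * ∫ s in a..t, (t - s) ^ (α - 1) *
        ((1 / Real.Gamma α) * ∫ u in a..s, (s - u) ^ (α - 1) * g u)
      = g η * (t - a) ^ (2 * α) / Real.Gamma (2 * α + 1) := by
  intro t ht
  rcases eq_or_lt_of_le ht.1 with rfl | hat
  · refine ⟨a, by simp, ?_⟩
    rw [intervalIntegral.integral_same, sub_self,
      Real.zero_rpow (by positivity : (2*α:ℝ) ≠ 0)]
    ring
  -- main case : a < t
  have hta : a ≤ t := hat.le
  have htb : t ≤ b := ht.2
  have hΓα : 0 < Real.Gamma α := Real.Gamma_pos_of_pos hα0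
  have hΓ2 : 0 < Real.Gamma (2*α+1) := Real.Gamma_pos_of_pos (by linarith)
  -- clamped version of g, continuous on all of ℝ
  set g' : ℝ → ℝ := fun u => g (max a (min u b)) with hg'def
  have hclamp : ∀ u : ℝ, max a (min u b) ∈ Set.Icc a b :=
    fun u => ⟨le_max_left _ _, max_le hab.le (min_le_right _ _)⟩
  have hg'cont : Continuous g' := by
    apply hg.comp_continuous
    · exact continuous_const.max (continuous_id.min continuous_const)
    · exact hclamp
  have hg'eq : ∀ u ∈ Set.Icc a b, g' u = g u := by
    intro u hu
    simp only [hg'def]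
    rw [min_eq_left hu.2, max_eq_right hu.1]
  -- inner integral with g'
  set I : ℝ → ℝ := fun s => ∫ u in a..s, (s-u)^(α-1) * g' u with hIdef
  -- min and max of g' on [a,t]
  obtain ⟨xm, hxm, hxmmin⟩ := isCompact_Icc.exists_isMinOn (Set.nonempty_Icc.mpr hta)
    (hg'cont.continuousOn (s := Set.Icc a t))
  obtain ⟨xM, hxM, hxMmax⟩ := isCompact_Icc.exists_isMaxOn (Set.nonempty_Icc.mpr hta)
    (hg'cont.continuousOn (s := Set.Icc a t))
  set m := g' xm with hm
  set M := g' xM with hM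
  have hmM : m ≤ M := hxmmin hxM
  -- pointwise bounds for I
  have hIbound : ∀ s ∈ Set.Icc a t,
      m * ((s-a)^α / α) ≤ I s ∧ I s ≤ M * ((s-a)^α / α) := by
    intro s hs
    have has' : a ≤ s := hs.1
    have hker : IntervalIntegrable (fun u => (s-u)^(α-1)) volume a s :=
      rpow_kernel_integrable hα0
    have hint : IntervalIntegrable (fun u => (s-u)^(α-1) * g' u) volume a s :=
      hker.mul_continuousOn hg'cont.continuousOn
    have hintm : IntervalIntegrable (fun u => (s-u)^(α-1) * m) volume a s :=
      hker.mul_const _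
    have hintM : IntervalIntegrable (fun u => (s-u)^(α-1) * M) volume a s :=
      hker.mul_const _
    have hvm : (∫ u in a..s, (s-u)^(α-1) * m) = m * ((s-a)^α / α) := by
      rw [intervalIntegral.integral_mul_const, inner_rpow_int hα0 has']; ring
    have hvM : (∫ u in a..s, (s-u)^(α-1) * M) = M * ((s-a)^α / α) := by
      rw [intervalIntegral.integral_mul_const, inner_rpow_int hα0 has']; ring
    constructor
    · rw [← hvm]
      apply intervalIntegral.integral_mono_on has' hintm hint
      intro u hu
      have hu' : u ∈ Set.Icc a t := ⟨hu.1, le_trans hu.2 hs.2⟩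
      exact mul_le_mul_of_nonneg_left (hxmmin hu')
        (Real.rpow_nonneg (by linarith [hu.2]) _)
    · rw [← hvM]
      apply intervalIntegral.integral_mono_on has' hint hintM
      intro u hu
      have hu' : u ∈ Set.Icc a t := ⟨hu.1, le_trans hu.2 hs.2⟩
      exact mul_le_mul_of_nonneg_left (hxMmax hu')
        (Real.rpow_nonneg (by linarith [hu.2]) _)
  -- measurability of I via product measurability
  set F : ℝ × ℝ → ℝ := Set.indicator {p : ℝ × ℝ | a < p.2 ∧ p.2 ≤ p.1}
    (fun p => (p.1 - p.2)^(α-1) * g' p.2) with hFdef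
  have hrpow_meas : Measurable fun x : ℝ => x ^ (α-1) :=
    measurable_of_continuousOn_compl_singleton 0
      (fun x hx => (Real.continuousAt_rpow_const x _ (Or.inl hx)).continuousWithinAt)
  have hFmeas : Measurable F := by
    apply Measurable.indicator
    · exact (hrpow_meas.comp (measurable_fst.sub measurable_snd)).mul
        (hg'cont.measurable.comp measurable_snd)
    · exact (measurableSet_lt measurable_const measurable_snd).inter
        (measurableSet_le measurable_snd measurable_fst)
  have hImeas : Measurable fun s => ∫ u, F (s, u) :=
    (hFmeas.stronglyMeasurable.integral_prod_right').measurable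
  have hIeq : ∀ s, a ≤ s → I s = ∫ u, F (s, u) := by
    intro s has'
    rw [hIdef]
    simp only
    rw [intervalIntegral.integral_of_le has',
      ← MeasureTheory.integral_indicator measurableSet_Ioc]
    have : (Set.Ioc a s).indicator (fun u => (s-u)^(α-1) * g' u) = fun u => F (s,u) := by
      funext u
      simp only [hFdef, Set.indicator_apply, Set.mem_Ioc, Set.mem_setOf_eq]
    rw [this]
  -- integrability of the outer integrand
  have hrpow_nonneg : ∀ s ∈ Set.Icc a t, (0:ℝ) ≤ (t-s)^(α-1) :=
    fun s hs => Real.rpow_nonneg (by linarith [hs.2]) _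
  set D : ℝ := (t-a)^α / α with hD
  have hDpos : 0 < D := by
    apply div_pos (Real.rpow_pos_of_pos (by linarith) _) hα0
  have hIabs : ∀ s ∈ Set.Icc a t, |I s| ≤ (|m| + |M|) * D := by
    intro s hs
    obtain ⟨h1, h2⟩ := hIbound s hs
    have hq0 : 0 ≤ (s-a)^α / α :=
      div_nonneg (Real.rpow_nonneg (by linarith [hs.1]) _) hα0.le
    have hqD : (s-a)^α / α ≤ D := by
      rw [hD]
      exact div_le_div_of_nonneg_right
        (Real.rpow_le_rpow (by linarith [hs.1]) (by linarith [hs.2]) hα0.le) hα0.le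
    rw [abs_le]
    constructor
    · nlinarith [abs_nonneg m, abs_nonneg M, neg_abs_le m, le_abs_self m]
    · nlinarith [abs_nonneg m, abs_nonneg M, neg_abs_le M, le_abs_self M]
  set hfun : ℝ → ℝ := fun s => (t-s)^(α-1) * ((1/Real.Gamma α) * I s) with hhfun
  have hmfun : Measurable fun s => (t-s)^(α-1) * ((1/Real.Gamma α) * ∫ u, F (s, u)) :=
    (hrpow_meas.comp (measurable_const.sub measurable_id)).mul
      (measurable_const.mul hImeas)
  have hhaesm : AEStronglyMeasurable hfun (volume.restrict (Set.Ioc a t)) := by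
    apply (hmfun.aestronglyMeasurable).congr
    filter_upwards [MeasureTheory.self_mem_ae_restrict measurableSet_Ioc] with s hs
    rw [hhfun]
    simp only
    rw [hIeq s hs.1.le]
  have hbound_int : IntervalIntegrable
      (fun s => (t-s)^(α-1) * ((1/Real.Gamma α) * ((|m| + |M|) * D))) volume a t :=
    (rpow_kernel_integrable hα0).mul_const _
  have hhint : IntervalIntegrable hfun volume a t := by
    rw [intervalIntegrable_iff_integrableOn_Ioc_of_le hta]
    apply MeasureTheory.Integrable.mono'
      ((intervalIntegrable_iff_integrableOn_Ioc_of_le hta).mp hbound_int) hhaesm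
    filter_upwards [MeasureTheory.self_mem_ae_restrict measurableSet_Ioc] with s hs
    have hs' : s ∈ Set.Icc a t := ⟨hs.1.le, hs.2⟩
    rw [hhfun]
    simp only
    rw [Real.norm_eq_abs, abs_mul, abs_mul, abs_of_nonneg (hrpow_nonneg s hs'),
      abs_of_nonneg (by positivity : (0:ℝ) ≤ 1/Real.Gamma α)]
    apply mul_le_mul_of_nonneg_left _ (hrpow_nonneg s hs')
    exact mul_le_mul_of_nonneg_left (hIabs s hs') (by positivity)
  -- comparison functions
  set q : ℝ → ℝ := fun s => (t-s)^(α-1) * (s-a)^α with hq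
  have hqcont : Continuous fun s : ℝ => (s-a)^α := by
    rw [continuous_iff_continuousAt]
    intro x
    exact (Real.continuousAt_rpow_const _ _ (Or.inr hα0.le)).comp
      (continuousAt_id.sub continuousAt_const)
  have hqint : IntervalIntegrable q volume a t :=
    (rpow_kernel_integrable hα0).mul_continuousOn hqcont.continuousOn
  have hqval : ∫ s in a..t, q s
      = (t-a)^(2*α) * (Real.Gamma (α+1) * Real.Gamma α / Real.Gamma (2*α+1)) :=
    outer_beta hα0 hat
  -- bounds for the outer integral
  have hlow_eq : (fun s => (t-s)^(α-1) * ((1/Real.Gamma α) * (m * ((s-a)^α / α))))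
      = fun s => (m / (Real.Gamma α * α)) * q s := by
    funext s; rw [hq]; simp only; ring
  have hup_eq : (fun s => (t-s)^(α-1) * ((1/Real.Gamma α) * (M * ((s-a)^α / α))))
      = fun s => (M / (Real.Gamma α * α)) * q s := by
    funext s; rw [hq]; simp only; ring
  have hlow : (m / (Real.Gamma α * α)) * ∫ s in a..t, q s ≤ ∫ s in a..t, hfun s := by
    rw [← intervalIntegral.integral_const_mul]
    apply intervalIntegral.integral_mono_on hta (hqint.const_mul _) hhint
    intro s hs
    show m / (Real.Gamma α * α) * ((t-s)^(α-1) * (s-a)^α)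
      ≤ (t-s)^(α-1) * ((1/Real.Gamma α) * I s)
    have key : (t-s)^(α-1) * ((1/Real.Gamma α) * (m * ((s-a)^α/α)))
        ≤ (t-s)^(α-1) * ((1/Real.Gamma α) * I s) :=
      mul_le_mul_of_nonneg_left
        (mul_le_mul_of_nonneg_left (hIbound s hs).1 (by positivity))
        (hrpow_nonneg s hs)
    have e : m / (Real.Gamma α * α) * ((t-s)^(α-1) * (s-a)^α)
        = (t-s)^(α-1) * ((1/Real.Gamma α) * (m * ((s-a)^α/α))) := by
      field_simp
    rw [e]
    exact key
  have hup : (∫ s in a..t, hfun s) ≤ (M / (Real.Gamma α * α)) * ∫ s in a..t, q s := by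
    rw [← intervalIntegral.integral_const_mul]
    apply intervalIntegral.integral_mono_on hta hhint (hqint.const_mul _)
    intro s hs
    show (t-s)^(α-1) * ((1/Real.Gamma α) * I s)
      ≤ M / (Real.Gamma α * α) * ((t-s)^(α-1) * (s-a)^α)
    have key : (t-s)^(α-1) * ((1/Real.Gamma α) * I s)
        ≤ (t-s)^(α-1) * ((1/Real.Gamma α) * (M * ((s-a)^α/α))) :=
      mul_le_mul_of_nonneg_left
        (mul_le_mul_of_nonneg_left (hIbound s hs).2 (by positivity))
        (hrpow_nonneg s hs)
    have e : M / (Real.Gamma α * α) * ((t-s)^(α-1) * (s-a)^α)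
        = (t-s)^(α-1) * ((1/Real.Gamma α) * (M * ((s-a)^α/α))) := by
      field_simp
    rw [e]
    exact key
  -- identify constants
  set K : ℝ := (t-a)^(2*α) / Real.Gamma (2*α+1) with hK
  have hKpos : 0 < K :=
    div_pos (Real.rpow_pos_of_pos (by linarith) _) hΓ2
  have hGadd : Real.Gamma (α+1) = α * Real.Gamma α := Real.Gamma_add_one hα0.ne'
  have hconstm : (m / (Real.Gamma α * α)) * ((t-a)^(2*α)
      * (Real.Gamma (α+1) * Real.Gamma α / Real.Gamma (2*α+1)))
      = m * Real.Gamma α * K := by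
    rw [hGadd, hK]; field_simp
  have hconstM : (M / (Real.Gamma α * α)) * ((t-a)^(2*α)
      * (Real.Gamma (α+1) * Real.Gamma α / Real.Gamma (2*α+1)))
      = M * Real.Gamma α * K := by
    rw [hGadd, hK]; field_simp
  -- the LHS, expressed via g'
  have hLHSrw : (∫ s in a..t, (t - s) ^ (α - 1) *
        ((1 / Real.Gamma α) * ∫ u in a..s, (s - u) ^ (α - 1) * g u))
      = ∫ s in a..t, hfun s := by
    apply intervalIntegral.integral_congr
    intro s hs
    rw [Set.uIcc_of_le hta] at hs
    have hin : (∫ u in a..s, (s - u) ^ (α - 1) * g u)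
        = ∫ u in a..s, (s - u) ^ (α - 1) * g' u := by
      apply intervalIntegral.integral_congr
      intro u hu
      rw [Set.uIcc_of_le hs.1] at hu
      show (s - u) ^ (α - 1) * g u = (s - u) ^ (α - 1) * g' u
      rw [hg'eq u ⟨hu.1, le_trans hu.2 (le_trans hs.2 htb)⟩]
    show (t - s) ^ (α - 1) * ((1 / Real.Gamma α) * ∫ u in a..s, (s - u) ^ (α - 1) * g u)
      = (t - s) ^ (α - 1) * ((1 / Real.Gamma α) * ∫ u in a..s, (s - u) ^ (α - 1) * g' u)
    rw [hin]
  set V : ℝ := (1 / Real.Gamma α) * ∫ s in a..t, hfun s with hV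
  have hVlow : m * K ≤ V := by
    rw [hV]
    have := mul_le_mul_of_nonneg_left hlow (by positivity : (0:ℝ) ≤ 1/Real.Gamma α)
    calc m * K = (1/Real.Gamma α) * ((m / (Real.Gamma α * α)) * ∫ s in a..t, q s) := by
          rw [hqval, hconstm]; field_simp
      _ ≤ _ := this
  have hVup : V ≤ M * K := by
    rw [hV]
    have := mul_le_mul_of_nonneg_left hup (by positivity : (0:ℝ) ≤ 1/Real.Gamma α)
    calc (1/Real.Gamma α) * ∫ s in a..t, hfun s ≤ _ := this
      _ = M * K := by rw [hqval, hconstM]; field_simp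
  -- intermediate value theorem
  have hmem : V / K ∈ Set.uIcc m M := by
    rw [Set.uIcc_of_le hmM]
    constructor
    · rw [le_div_iff₀ hKpos]; exact hVlow
    · rw [div_le_iff₀ hKpos]; exact hVup
  have hsub : Set.uIcc xm xM ⊆ Set.Icc a t := Set.uIcc_subset_Icc hxm hxM
  obtain ⟨η, hη, hηval⟩ := intermediate_value_uIcc
    (hg'cont.continuousOn (s := Set.uIcc xm xM)) hmem
  have hηmem : η ∈ Set.Icc a t := hsub hη
  refine ⟨η, hηmem, ?_⟩
  have hgη : g η = V / K := by
    rw [← hηval, hg'eq η ⟨hηmem.1, le_trans hηmem.2 htb⟩]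
  rw [hLHSrw, ← hV, show g η * (t - a) ^ (2 * α) / Real.Gamma (2 * α + 1)
    = g η * K from by rw [hK]; ring, hgη]
  field_simp
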